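/- Let M' be a matroid on a finite ground set N' and let w : N' → ℕ be a weight function with 1 ≤ w(e) ≤ W for every e ∈ N'. Let N = {(e,i) : e ∈ N', 1 ≤ i ≤ w(e)} and let 𝓘 be the family of all subsets I ⊆ N such that for every i ∈ {1,…,W} the set {e ∈ N' : (e, w(e)-i+1) ∈ I} is independent in M'. Then 𝓘 satisfies the matroid independence axioms: (i) ∅ ∈ 𝓘; (ii) if A ⊆ B and B ∈ 𝓘 then A ∈ 𝓘; (iii) if A, B ∈ 𝓘 and |A| > |B| then there exists x ∈ A \ B with B ∪ {x} ∈ 𝓘. Hence 𝓘 is the family of independent sets of a matroid on N (the unfolded matroid M₂). -/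

import Mathlib

open Finset

/-- A matroid on a finite ground set, given by its family of independent sets. -/
structure FinMatroid (α : Type*) [DecidableEq α] [Fintype α] where
  Indep : Finset α → Prop
  indep_empty : Indep ∅
  indep_subset : ∀ ⦃A B : Finset α⦄, A ⊆ B → Indep B → Indep A
  indep_exchange : ∀ ⦃A B : Finset α⦄, Indep A → Indep B → B.card < A.card →
    ∃ x ∈ A \ B, Indep (insert x B)

/-- The rank of a set `S` in a matroid: the size of a largest independent subset of `S`. -/
noncomputable def FinMatroid.rank {α : Type*} [DecidableEq α] [Fintype α]
    (M : FinMatroid α) (S : Finset α) : ℕ :=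
  sSup {n : ℕ | ∃ I ⊆ S, M.Indep I ∧ I.card = n}

/-- The rank of `S` with respect to an arbitrary independence predicate. -/
noncomputable def frank {β : Type*} (Ind : Finset β → Prop) (S : Finset β) : ℕ :=
  sSup {n : ℕ | ∃ I ⊆ S, Ind I ∧ I.card = n}

variable {α : Type*} [DecidableEq α] [Fintype α]

/-- The unfolded ground set `N = {(e,i) : e ∈ N', 1 ≤ i ≤ w e}`. -/
def unfoldGround (w : α → ℕ) : Finset (α × ℕ) :=
  Finset.univ.biUnion fun e => (Finset.Icc 1 (w e)).image fun i => (e, i)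

/-- The `i`-th layer projection `{e ∈ N' : (e,i) ∈ I}`. -/
def proj1 (I : Finset (α × ℕ)) (i : ℕ) : Finset α :=
  Finset.univ.filter fun e => (e, i) ∈ I

/-- The `i`-th reverse-layer projection `{e ∈ N' : (e, w e - i + 1) ∈ I}`. -/
def proj2 (w : α → ℕ) (I : Finset (α × ℕ)) (i : ℕ) : Finset α :=
  Finset.univ.filter fun e => i ≤ w e ∧ (e, w e - i + 1) ∈ I

/-- Independence in the unfolded matroid `M₁`. -/
def UnfoldIndep1 (M' : FinMatroid α) (w : α → ℕ) (W : ℕ) (I : Finset (α × ℕ)) : Prop :=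
  I ⊆ unfoldGround w ∧ ∀ i ∈ Finset.Icc 1 W, M'.Indep (proj1 I i)

/-- Independence in the unfolded matroid `M₂`. -/
def UnfoldIndep2 (M' : FinMatroid α) (w : α → ℕ) (W : ℕ) (I : Finset (α × ℕ)) : Prop :=
  I ⊆ unfoldGround w ∧ ∀ i ∈ Finset.Icc 1 W, M'.Indep (proj2 w I i)

/-- The unfolding `{(e,i) : e ∈ S', 1 ≤ i ≤ w e}` of a set `S' ⊆ N'`. -/
def unfoldSet (w : α → ℕ) (S' : Finset α) : Finset (α × ℕ) :=
  S'.biUnion fun e => (Finset.Icc 1 (w e)).image fun i => (e, i)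

/-- the family `UnfoldIndep2 M' w W` satisfies the matroid
independence axioms, so it is the family of independent sets of a matroid on
the unfolded ground set (the unfolded matroid `M₂`). -/
lemma mem_unfoldGround {w : α → ℕ} {p : α × ℕ} :
    p ∈ unfoldGround w ↔ 1 ≤ p.2 ∧ p.2 ≤ w p.1 := by
  obtain ⟨a, b⟩ := p
  simp only [unfoldGround, Finset.mem_biUnion, Finset.mem_univ, true_and, Finset.mem_image,
    Finset.mem_Icc, Prod.mk.injEq]
  constructor
  · rintro ⟨e, i, ⟨h1, h2⟩, rfl, rfl⟩; exact ⟨h1, h2⟩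
  · rintro ⟨h1, h2⟩; exact ⟨a, b, ⟨h1, h2⟩, rfl, rfl⟩

lemma card_proj2_sum (w : α → ℕ) (W : ℕ) (hw : ∀ e : α, 1 ≤ w e ∧ w e ≤ W)
    {I : Finset (α × ℕ)} (hI : I ⊆ unfoldGround w) :
    I.card = ∑ i ∈ Finset.Icc 1 W, (proj2 w I i).card := by
  rw [Finset.card_eq_sum_card_fiberwise (f := fun p => w p.1 - p.2 + 1)
      (t := Finset.Icc 1 W) (fun p hp => by
        have h := mem_unfoldGround.mp (hI hp)
        have h2 := (hw p.1).2
        simp only [Finset.mem_coe, Finset.mem_Icc]; omega)]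
  refine Finset.sum_congr rfl fun i hi => ?_
  refine Finset.card_bij (fun p _ => p.1) ?_ ?_ ?_
  · intro p hp
    simp only [Finset.mem_filter] at hp
    obtain ⟨hpI, hpi⟩ := hp
    have h := mem_unfoldGround.mp (hI hpI)
    simp only [proj2, Finset.mem_filter, Finset.mem_univ, true_and]
    have hp2 : w p.1 - i + 1 = p.2 := by omega
    refine ⟨by omega, ?_⟩
    have : (p.1, w p.1 - i + 1) = p := by
      rw [hp2]
    rw [this]; exact hpI
  · intro p hp q hq hpq
    simp only [Finset.mem_filter] at hp hq
    have h1 := mem_unfoldGround.mp (hI hp.1)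
    have h2 := mem_unfoldGround.mp (hI hq.1)
    replace hpq : p.1 = q.1 := hpq
    have hww : w p.1 = w q.1 := by rw [hpq]
    have h3 := hp.2
    have h4 := hq.2
    exact Prod.ext hpq (by omega)
  · intro e he
    simp only [proj2, Finset.mem_filter, Finset.mem_univ, true_and] at he
    refine ⟨(e, w e - i + 1), ?_, rfl⟩
    simp only [Finset.mem_filter]
    simp only [Finset.mem_Icc] at hi
    exact ⟨he.2, by omega⟩

theorem unfolded_matroid_two_axioms (M' : FinMatroid α) (w : α → ℕ) (W : ℕ)
    (hw : ∀ e : α, 1 ≤ w e ∧ w e ≤ W) :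
    UnfoldIndep2 M' w W ∅ ∧
    (∀ A B : Finset (α × ℕ), A ⊆ B → UnfoldIndep2 M' w W B → UnfoldIndep2 M' w W A) ∧
    (∀ A B : Finset (α × ℕ), UnfoldIndep2 M' w W A → UnfoldIndep2 M' w W B →
      B.card < A.card → ∃ x ∈ A \ B, UnfoldIndep2 M' w W (insert x B)) := by
  refine ⟨⟨Finset.empty_subset _, fun i _ => ?_⟩, ?_, ?_⟩
  · have : proj2 w (∅ : Finset (α × ℕ)) i = ∅ := by
      simp [proj2]
    rw [this]; exact M'.indep_empty
  · rintro A B hAB ⟨hBg, hB⟩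
    refine ⟨hAB.trans hBg, fun i hi => ?_⟩
    refine M'.indep_subset (fun e he => ?_) (hB i hi)
    simp only [proj2, Finset.mem_filter, Finset.mem_univ, true_and] at he ⊢
    exact ⟨he.1, hAB he.2⟩
  · rintro A B ⟨hAg, hA⟩ ⟨hBg, hB⟩ hcard
    -- find a layer where A beats B
    have hsum : ∑ i ∈ Finset.Icc 1 W, (proj2 w B i).card <
        ∑ i ∈ Finset.Icc 1 W, (proj2 w A i).card := by
      rw [← card_proj2_sum w W hw hAg, ← card_proj2_sum w W hw hBg]; exact hcard
    have hex : ∃ i ∈ Finset.Icc 1 W, (proj2 w B i).card < (proj2 w A i).card := by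
      by_contra hcon
      push_neg at hcon
      exact absurd (Finset.sum_le_sum hcon) (not_le.mpr hsum)
    obtain ⟨i, hi, hlt⟩ := hex
    obtain ⟨e, heAB, hins⟩ := M'.indep_exchange (hA i hi) (hB i hi) hlt
    simp only [Finset.mem_sdiff, proj2, Finset.mem_filter, Finset.mem_univ, true_and] at heAB
    obtain ⟨⟨hiw, heA⟩, heB⟩ := heAB
    have heB' : (e, w e - i + 1) ∉ B := fun h => heB ⟨hiw, h⟩
    simp only [Finset.mem_Icc] at hi
    refine ⟨(e, w e - i + 1), Finset.mem_sdiff.mpr ⟨heA, heB'⟩, ?_, ?_⟩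
    · intro p hp
      rcases Finset.mem_insert.mp hp with rfl | hp
      · exact mem_unfoldGround.mpr ⟨show 1 ≤ w e - i + 1 by omega, show w e - i + 1 ≤ w e by omega⟩
      · exact hBg hp
    · intro j hj
      simp only [Finset.mem_Icc] at hj
      by_cases hji : j = i
      · subst hji
        have : proj2 w (insert (e, w e - j + 1) B) j = insert e (proj2 w B j) := by
          ext f
          simp only [proj2, Finset.mem_filter, Finset.mem_univ, true_and, Finset.mem_insert,
            Prod.mk.injEq]
          constructor
          · rintro ⟨hf, ⟨rfl, -⟩ | hmem⟩
            · exact Or.inl rfl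
            · exact Or.inr ⟨hf, hmem⟩
          · rintro (rfl | ⟨hf, hmem⟩)
            · exact ⟨hiw, Or.inl ⟨rfl, rfl⟩⟩
            · exact ⟨hf, Or.inr hmem⟩
        rw [this]; exact hins
      · have : proj2 w (insert (e, w e - i + 1) B) j = proj2 w B j := by
          ext f
          simp only [proj2, Finset.mem_filter, Finset.mem_univ, true_and, Finset.mem_insert,
            Prod.mk.injEq]
          constructor
          · rintro ⟨hf, ⟨rfl, heq⟩ | hmem⟩
            · exact absurd (show j = i by omega) hji
            · exact ⟨hf, hmem⟩
          · rintro ⟨hf, hmem⟩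
            exact ⟨hf, Or.inr hmem⟩
        rw [this]
        exact hB j (Finset.mem_Icc.mpr hj)
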